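/- Let μ be a Borel probability measure on ℝ^d with μ*μ ∈ L^∞(ℝ^d). Then for all f, g ∈ L^2(μ) and 1 ≤ p ≤ ∞, one has ‖fμ * gμ‖_{L^p(ℝ^d)} ≤ ‖μ*μ‖_∞^{1/p'} · ‖f‖_{L^p(μ)} · ‖g‖_{L^p(μ)}, where p' is the conjugate exponent. -/

import Mathlib

open MeasureTheory Metric
open scoped ENNReal

section AuxiliaryNamespaceOpens
open Filter
open scoped Topology

section Aux

variable {α : Type*} [MeasurableSpace α]

theorem my_prod_withDensity (μ ν : Measure α) [SigmaFinite μ] [SigmaFinite ν]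
    {F G : α → ℝ≥0∞} (hF : Measurable F) (hG : Measurable G)
    [SigmaFinite (ν.withDensity G)] [SigmaFinite (μ.withDensity F)] :
    (μ.withDensity F).prod (ν.withDensity G) =
      (μ.prod ν).withDensity (fun z => F z.1 * G z.2) := by
  refine Measure.prod_eq fun s t hs ht => ?_
  rw [withDensity_apply _ (hs.prod ht), ← Measure.prod_restrict,
    lintegral_prod_mul hF.aemeasurable hG.aemeasurable,
    withDensity_apply _ hs, withDensity_apply _ ht]

variable {β : Type*} [MetricSpace β] [MeasurableSpace β] [BorelSpace β]
  [SecondCountableTopology β] [HasBesicovitchCovering β]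

/-- General bilinear convolution-type estimate. -/
theorem bilinear_aux
    (vol : Measure β) [IsLocallyFiniteMeasure vol] [vol.IsOpenPosMeasure]
    [IsFiniteMeasureOnCompacts vol] [ProperSpace β]
    (μ : Measure α) [IsProbabilityMeasure μ]
    (T : α × α → β) (hT : Measurable T)
    (M : ℝ)
    (hbd : ∀ A : Set β, MeasurableSet A →
      Measure.map T (μ.prod μ) A ≤ ENNReal.ofReal M * vol A)
    (f g : α → ℝ) (hfm : Measurable f) (hgm : Measurable g)
    (hf0 : 0 ≤ f) (hg0 : 0 ≤ g)
    (hf2 : MemLp f 2 μ) (hg2 : MemLp g 2 μ)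
    (p : ℝ≥0∞) (hp : 1 ≤ p) :
    eLpNorm (fun x =>
        ((Measure.map T
          ((μ.withDensity fun y => ENNReal.ofReal (f y)).prod
            (μ.withDensity fun y => ENNReal.ofReal (g y)))).rnDeriv vol x).toReal)
        p vol ≤
      ENNReal.ofReal M ^ (1 - p⁻¹).toReal * eLpNorm f p μ * eLpNorm g p μ := by
  classical
  set F : α → ℝ≥0∞ := fun y => ENNReal.ofReal (f y) with hFdef
  set G : α → ℝ≥0∞ := fun y => ENNReal.ofReal (g y) with hGdef
  have hFm : Measurable F := hfm.ennreal_ofReal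
  have hGm : Measurable G := hgm.ennreal_ofReal
  have hFnorm : ∀ x, ‖f x‖ₑ = F x := fun x => Real.enorm_eq_ofReal (hf0 x)
  have hGnorm : ∀ x, ‖g x‖ₑ = G x := fun x => Real.enorm_eq_ofReal (hg0 x)
  -- integrability of F, G
  have hFint : ∫⁻ x, F x ∂μ < ∞ := by
    have h1 : MemLp f 1 μ := hf2.mono_exponent (by norm_num)
    have := (memLp_one_iff_integrable.mp h1).2
    rw [HasFiniteIntegral] at this
    simpa only [hFnorm] using this
  have hGint : ∫⁻ x, G x ∂μ < ∞ := by
    have h1 : MemLp g 1 μ := hg2.mono_exponent (by norm_num)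
    have := (memLp_one_iff_integrable.mp h1).2
    rw [HasFiniteIntegral] at this
    simpa only [hGnorm] using this
  haveI : IsFiniteMeasure (μ.withDensity F) :=
    isFiniteMeasure_withDensity hFint.ne
  haveI : IsFiniteMeasure (μ.withDensity G) :=
    isFiniteMeasure_withDensity hGint.ne
  have hprod : (μ.withDensity F).prod (μ.withDensity G) =
      (μ.prod μ).withDensity (fun z => F z.1 * G z.2) :=
    my_prod_withDensity μ μ hFm hGm
  set W : α × α → ℝ≥0∞ := fun z => F z.1 * G z.2 with hWdef
  have hWm : Measurable W := (hFm.comp measurable_fst).mul (hGm.comp measurable_snd)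
  set ν : Measure β := Measure.map T ((μ.withDensity F).prod (μ.withDensity G)) with hνdef
  have hν_apply : ∀ A : Set β, MeasurableSet A →
      ν A = ∫⁻ z in T ⁻¹' A, W z ∂(μ.prod μ) := by
    intro A hA
    rw [hνdef, hprod, Measure.map_apply hT hA, withDensity_apply _ (hT hA)]
  have hν_univ : ν Set.univ = (∫⁻ x, F x ∂μ) * ∫⁻ x, G x ∂μ := by
    rw [hν_apply _ MeasurableSet.univ]
    simp only [Set.preimage_univ, Measure.restrict_univ]
    exact lintegral_prod_mul hFm.aemeasurable hGm.aemeasurable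
  haveI hνfin : IsFiniteMeasure ν :=
    ⟨by rw [hν_univ]; exact ENNReal.mul_lt_top hFint hGint⟩
  have hM0 : 0 < ENNReal.ofReal M := by
    by_contra h
    push_neg at h
    have hM0' : ENNReal.ofReal M = 0 := le_antisymm h zero_le
    have h1 := hbd Set.univ MeasurableSet.univ
    rw [Measure.map_apply hT MeasurableSet.univ, hM0', zero_mul] at h1
    simp at h1
  have hp0 : p ≠ 0 := (zero_lt_one.trans_le hp).ne'
  have hh_lt : ∀ᵐ x ∂vol, ν.rnDeriv vol x < ∞ := Measure.rnDeriv_lt_top ν vol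
  have hh_norm : ∀ᵐ x ∂vol, (‖(ν.rnDeriv vol x).toReal‖₊ : ℝ≥0∞) = ν.rnDeriv vol x := by
    filter_upwards [hh_lt] with x hx
    exact (Real.enorm_eq_ofReal ENNReal.toReal_nonneg).trans (ENNReal.ofReal_toReal hx.ne)
  rcases eq_or_lt_of_le hp with hp1 | hp1
  · -- case p = 1
    subst hp1
    simp only [inv_one, tsub_self, ENNReal.toReal_zero, ENNReal.rpow_zero, one_mul]
    rw [eLpNorm_one_eq_lintegral_enorm, eLpNorm_one_eq_lintegral_enorm,
      eLpNorm_one_eq_lintegral_enorm]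
    calc ∫⁻ x, ‖(ν.rnDeriv vol x).toReal‖₊ ∂vol
        = ∫⁻ x, ν.rnDeriv vol x ∂vol := lintegral_congr_ae hh_norm
      _ ≤ ν Set.univ := Measure.lintegral_rnDeriv_le
      _ = (∫⁻ x, F x ∂μ) * ∫⁻ x, G x ∂μ := hν_univ
      _ = (∫⁻ x, ‖f x‖ₑ ∂μ) * ∫⁻ x, ‖g x‖ₑ ∂μ := by simp_rw [hFnorm, hGnorm]
  by_cases hpt : p = ⊤
  · -- case p = ∞
    subst hpt
    have hexp : ((1 : ℝ≥0∞) - ⊤⁻¹).toReal = 1 := by simp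
    rw [hexp, ENNReal.rpow_one, eLpNorm_exponent_top, eLpNorm_exponent_top,
      eLpNorm_exponent_top]
    set c := ENNReal.ofReal M * eLpNormEssSup f μ * eLpNormEssSup g μ with hc
    have hWbd : ∀ᵐ z ∂(μ.prod μ), W z ≤ eLpNormEssSup f μ * eLpNormEssSup g μ := by
      have hfst : Measure.map Prod.fst (μ.prod μ) = μ := by
        rw [Measure.map_fst_prod]; simp
      have hsnd : Measure.map Prod.snd (μ.prod μ) = μ := by
        rw [Measure.map_snd_prod]; simp
      have h1' : ∀ᵐ y ∂(Measure.map Prod.fst (μ.prod μ)), F y ≤ eLpNormEssSup f μ := by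
        rw [hfst]
        filter_upwards [enorm_ae_le_eLpNormEssSup f μ] with x hx
        rw [← hFnorm x]; exact hx
      have h1 := ae_of_ae_map (p := fun y => F y ≤ eLpNormEssSup f μ)
        measurable_fst.aemeasurable h1'
      have h2' : ∀ᵐ y ∂(Measure.map Prod.snd (μ.prod μ)), G y ≤ eLpNormEssSup g μ := by
        rw [hsnd]
        filter_upwards [enorm_ae_le_eLpNormEssSup g μ] with x hx
        rw [← hGnorm x]; exact hx
      have h2 := ae_of_ae_map (p := fun y => G y ≤ eLpNormEssSup g μ)
        measurable_snd.aemeasurable h2'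
      filter_upwards [h1, h2] with z hz1 hz2
      exact mul_le_mul' hz1 hz2
    have hmeas_bd : ∀ A : Set β, MeasurableSet A → ν A ≤ c * vol A := by
      intro A hA
      rw [hν_apply A hA]
      calc ∫⁻ z in T ⁻¹' A, W z ∂(μ.prod μ)
          ≤ ∫⁻ _ in T ⁻¹' A, eLpNormEssSup f μ * eLpNormEssSup g μ ∂(μ.prod μ) :=
            lintegral_mono_ae (ae_restrict_of_ae hWbd)
        _ = eLpNormEssSup f μ * eLpNormEssSup g μ * (μ.prod μ) (T ⁻¹' A) := by
            rw [setLIntegral_const]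
        _ = eLpNormEssSup f μ * eLpNormEssSup g μ * (Measure.map T (μ.prod μ)) A := by
            rw [Measure.map_apply hT hA]
        _ ≤ eLpNormEssSup f μ * eLpNormEssSup g μ * (ENNReal.ofReal M * vol A) :=
            mul_le_mul_right (hbd A hA) _
        _ = c * vol A := by rw [hc]; ring
    have hlim := Besicovitch.ae_tendsto_rnDeriv ν vol
    have hbound : ∀ᵐ x ∂vol, ν.rnDeriv vol x ≤ c := by
      filter_upwards [hlim] with x hx
      refine le_of_tendsto hx (eventually_nhdsWithin_of_forall fun r hr => ?_)
      exact ENNReal.div_le_of_le_mul (hmeas_bd _ measurableSet_closedBall)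
    rw [eLpNormEssSup]
    refine essSup_le_of_ae_le _ ?_
    filter_upwards [hbound, hh_norm] with x h1 h2
    calc (‖(ν.rnDeriv vol x).toReal‖₊ : ℝ≥0∞) = ν.rnDeriv vol x := h2
      _ ≤ c := h1
  -- case 1 < p < ∞
  set pr : ℝ := p.toReal with hprdef
  have hpr1 : 1 < pr := by
    rw [hprdef, ← ENNReal.toReal_one]
    exact ENNReal.toReal_strict_mono hpt hp1
  have hpr0 : 0 < pr := lt_trans one_pos hpr1
  set qr : ℝ := pr / (pr - 1) with hqrdef
  have hpq : pr.HolderConjugate qr := (Real.holderConjugate_iff_eq_conjExponent hpr1).2 hqrdef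
  have hqr0 : 0 < qr := hpq.symm.pos
  have hqrinv : 1 / qr = 1 - 1 / pr := by
    rw [one_div, one_div, ← hpq.one_sub_inv]
  have hpinv_le : p⁻¹ ≤ 1 := ENNReal.inv_le_one.mpr hp
  have hexp : (1 - p⁻¹).toReal = 1 / qr := by
    rw [ENNReal.toReal_sub_of_le hpinv_le ENNReal.one_ne_top, ENNReal.toReal_one,
      ENNReal.toReal_inv, hqrinv, one_div, ← hprdef]
  by_cases hf_zero : eLpNorm f p μ = 0
  · have hf_ae : f =ᵐ[μ] 0 := (eLpNorm_eq_zero_iff hfm.aestronglyMeasurable hp0).mp hf_zero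
    have hF_ae : F =ᵐ[μ] 0 := by
      filter_upwards [hf_ae] with x hx
      simp [hFdef, hx]
    have hwd : μ.withDensity F = 0 := by
      rw [withDensity_congr_ae hF_ae, withDensity_zero]
    have hν0 : ν = 0 := by rw [hνdef, hwd, Measure.zero_prod, Measure.map_zero]
    have hrn : ν.rnDeriv vol =ᵐ[vol] 0 := by rw [hν0]; exact Measure.rnDeriv_zero vol
    have hLHS : eLpNorm (fun x => (ν.rnDeriv vol x).toReal) p vol = 0 := by
      have : (fun x => (ν.rnDeriv vol x).toReal) =ᵐ[vol] (fun _ => (0 : ℝ)) := by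
        filter_upwards [hrn] with x hx
        simp [hx]
      rw [eLpNorm_congr_ae this, eLpNorm_zero']
    rw [hLHS]
    exact zero_le
  by_cases hg_zero : eLpNorm g p μ = 0
  · have hg_ae : g =ᵐ[μ] 0 := (eLpNorm_eq_zero_iff hgm.aestronglyMeasurable hp0).mp hg_zero
    have hG_ae : G =ᵐ[μ] 0 := by
      filter_upwards [hg_ae] with x hx
      simp [hGdef, hx]
    have hwd : μ.withDensity G = 0 := by
      rw [withDensity_congr_ae hG_ae, withDensity_zero]
    have hν0 : ν = 0 := by rw [hνdef, hwd, Measure.prod_zero, Measure.map_zero]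
    have hrn : ν.rnDeriv vol =ᵐ[vol] 0 := by rw [hν0]; exact Measure.rnDeriv_zero vol
    have hLHS : eLpNorm (fun x => (ν.rnDeriv vol x).toReal) p vol = 0 := by
      have : (fun x => (ν.rnDeriv vol x).toReal) =ᵐ[vol] (fun _ => (0 : ℝ)) := by
        filter_upwards [hrn] with x hx
        simp [hx]
      rw [eLpNorm_congr_ae this, eLpNorm_zero']
    rw [hLHS]
    exact zero_le
  have hMe0 : ENNReal.ofReal M ^ (1 - p⁻¹).toReal ≠ 0 :=
    (ENNReal.rpow_pos hM0 ENNReal.ofReal_ne_top).ne'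
  by_cases hf_top : eLpNorm f p μ = ⊤
  · rw [hf_top, ENNReal.mul_top hMe0, ENNReal.top_mul hg_zero]
    exact le_top
  by_cases hg_top : eLpNorm g p μ = ⊤
  · rw [hg_top, ENNReal.mul_top (mul_ne_zero hMe0 hf_zero)]
    exact le_top
  -- main subcase : everything finite
  rw [hexp]
  set c : ℝ≥0∞ := ENNReal.ofReal M ^ (1 / qr) with hcdef
  have hc_ne_top : c ≠ ⊤ := ENNReal.rpow_ne_top_of_nonneg (by positivity) ENNReal.ofReal_ne_top
  set W2 : α × α → ℝ≥0∞ := fun z => F z.1 ^ pr * G z.2 ^ pr with hW2def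
  have hFprm : Measurable fun x => F x ^ pr := ENNReal.continuous_rpow_const.measurable.comp hFm
  have hGprm : Measurable fun x => G x ^ pr := ENNReal.continuous_rpow_const.measurable.comp hGm
  have hW2m : Measurable W2 := (hFprm.comp measurable_fst).mul (hGprm.comp measurable_snd)
  set τ : Measure β := Measure.map T ((μ.prod μ).withDensity W2) with hτdef
  have hτ_apply : ∀ A : Set β, MeasurableSet A →
      τ A = ∫⁻ z in T ⁻¹' A, W2 z ∂(μ.prod μ) := by
    intro A hA
    rw [hτdef, Measure.map_apply hT hA, withDensity_apply _ (hT hA)]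
  have hFpr_int : ∫⁻ x, F x ^ pr ∂μ = eLpNorm f p μ ^ pr := by
    rw [eLpNorm_eq_lintegral_rpow_enorm_toReal hp0 hpt, ← hprdef, ← ENNReal.rpow_mul, one_div,
      inv_mul_cancel₀ hpr0.ne', ENNReal.rpow_one]
    exact (lintegral_congr fun x => by rw [hFnorm]).symm
  have hGpr_int : ∫⁻ x, G x ^ pr ∂μ = eLpNorm g p μ ^ pr := by
    rw [eLpNorm_eq_lintegral_rpow_enorm_toReal hp0 hpt, ← hprdef, ← ENNReal.rpow_mul, one_div,
      inv_mul_cancel₀ hpr0.ne', ENNReal.rpow_one]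
    exact (lintegral_congr fun x => by rw [hGnorm]).symm
  have hτ_univ : τ Set.univ = eLpNorm f p μ ^ pr * eLpNorm g p μ ^ pr := by
    rw [hτ_apply _ MeasurableSet.univ]
    simp only [Set.preimage_univ, Measure.restrict_univ]
    rw [hW2def, lintegral_prod_mul hFprm.aemeasurable hGprm.aemeasurable, hFpr_int, hGpr_int]
  haveI hτfin : IsFiniteMeasure τ := ⟨by
    rw [hτ_univ]
    exact ENNReal.mul_lt_top
      (ENNReal.rpow_lt_top_of_nonneg hpr0.le hf_top)
      (ENNReal.rpow_lt_top_of_nonneg hpr0.le hg_top)⟩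
  have hkey : ∀ A : Set β, MeasurableSet A →
      ν A ≤ τ A ^ (1 / pr) * (ENNReal.ofReal M * vol A) ^ (1 / qr) := by
    intro A hA
    have hS : MeasurableSet (T ⁻¹' A) := hT hA
    have hνA : ν A = ∫⁻ z, ((T ⁻¹' A).indicator W * (T ⁻¹' A).indicator (1 : α × α → ℝ≥0∞)) z ∂(μ.prod μ) := by
      rw [hν_apply A hA, ← lintegral_indicator hS]
      refine lintegral_congr fun z => ?_
      by_cases hz : z ∈ T ⁻¹' A <;>
        simp [Set.indicator_of_mem, Set.indicator_of_notMem, hz]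
    have hH := ENNReal.lintegral_mul_le_Lp_mul_Lq (μ.prod μ) hpq
      ((hWm.indicator hS).aemeasurable) ((measurable_one.indicator hS).aemeasurable)
    rw [hνA]
    refine hH.trans ?_
    have e1 : ∫⁻ z, (T ⁻¹' A).indicator W z ^ pr ∂(μ.prod μ) = τ A := by
      rw [hτ_apply A hA, ← lintegral_indicator hS]
      refine lintegral_congr fun z => ?_
      by_cases hz : z ∈ T ⁻¹' A
      · simp only [Set.indicator_of_mem hz]
        exact ENNReal.mul_rpow_of_nonneg _ _ hpr0.le
      · simp [Set.indicator_of_notMem hz, ENNReal.zero_rpow_of_pos hpr0]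
    have e2 : ∫⁻ z, (T ⁻¹' A).indicator (1 : α × α → ℝ≥0∞) z ^ qr ∂(μ.prod μ)
        = (μ.prod μ) (T ⁻¹' A) := by
      rw [← lintegral_indicator_one hS]
      refine lintegral_congr fun z => ?_
      by_cases hz : z ∈ T ⁻¹' A
      · simp [Set.indicator_of_mem hz]
      · simp [Set.indicator_of_notMem hz, ENNReal.zero_rpow_of_pos hqr0]
    rw [e1, e2]
    have hπS : (μ.prod μ) (T ⁻¹' A) ≤ ENNReal.ofReal M * vol A := by
      rw [← Measure.map_apply hT hA]
      exact hbd A hA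
    exact mul_le_mul_right (ENNReal.rpow_le_rpow hπS (by positivity)) _
  have hν_lim := Besicovitch.ae_tendsto_rnDeriv ν vol
  have hτ_lim := Besicovitch.ae_tendsto_rnDeriv τ vol
  have hae : ∀ᵐ x ∂vol, ν.rnDeriv vol x ≤ τ.rnDeriv vol x ^ (1 / pr) * c := by
    filter_upwards [hν_lim, hτ_lim] with x hx1 hx2
    have htend : Tendsto
        (fun r => (τ (closedBall x r) / vol (closedBall x r)) ^ (1 / pr) * c)
        (𝓝[>] 0) (𝓝 (τ.rnDeriv vol x ^ (1 / pr) * c)) := by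
      refine ENNReal.Tendsto.mul_const ?_ (Or.inr hc_ne_top)
      exact (ENNReal.continuous_rpow_const.tendsto _).comp hx2
    refine le_of_tendsto_of_tendsto hx1 htend
      (eventually_nhdsWithin_of_forall fun r hr => ?_)
    have hr0 : (0 : ℝ) < r := hr
    have hV0 : vol (closedBall x r) ≠ 0 := (measure_closedBall_pos vol x hr0).ne'
    have hVt : vol (closedBall x r) ≠ ⊤ := measure_closedBall_lt_top.ne
    have hVsplit : vol (closedBall x r)
        = vol (closedBall x r) ^ (1 / pr) * vol (closedBall x r) ^ (1 / qr) := by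
      rw [← ENNReal.rpow_add _ _ hV0 hVt, one_div, one_div, hpq.inv_add_inv_eq_one,
        ENNReal.rpow_one]
    have hk := hkey (closedBall x r) measurableSet_closedBall
    calc ν (closedBall x r) / vol (closedBall x r)
        ≤ (τ (closedBall x r) ^ (1 / pr)
            * (ENNReal.ofReal M * vol (closedBall x r)) ^ (1 / qr))
            / vol (closedBall x r) := ENNReal.div_le_div_right hk _
      _ = (τ (closedBall x r) ^ (1 / pr) * c) * vol (closedBall x r) ^ (1 / qr)
            / (vol (closedBall x r) ^ (1 / pr) * vol (closedBall x r) ^ (1 / qr)) := by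
          rw [ENNReal.mul_rpow_of_nonneg _ _ (by positivity), ← hVsplit, hcdef]
          ring_nf
      _ = (τ (closedBall x r) ^ (1 / pr) * c) / vol (closedBall x r) ^ (1 / pr) :=
          ENNReal.mul_div_mul_right _ _
            (ENNReal.rpow_pos (pos_iff_ne_zero.mpr hV0) hVt).ne'
            (ENNReal.rpow_ne_top_of_nonneg (by positivity) hVt)
      _ = (τ (closedBall x r) / vol (closedBall x r)) ^ (1 / pr) * c := by
          rw [ENNReal.div_rpow_of_nonneg _ _ (by positivity)]
          simp only [div_eq_mul_inv]
          ring
  have hHm : Measurable (τ.rnDeriv vol) := Measure.measurable_rnDeriv τ vol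
  rw [eLpNorm_eq_lintegral_rpow_enorm_toReal hp0 hpt, ← hprdef]
  have step1 : ∫⁻ x, (‖(ν.rnDeriv vol x).toReal‖₊ : ℝ≥0∞) ^ pr ∂vol
      = ∫⁻ x, ν.rnDeriv vol x ^ pr ∂vol :=
    lintegral_congr_ae (by filter_upwards [hh_norm] with x hx; rw [hx])
  have step2 : ∫⁻ x, ν.rnDeriv vol x ^ pr ∂vol ≤ ∫⁻ x, τ.rnDeriv vol x * c ^ pr ∂vol := by
    refine lintegral_mono_ae ?_
    filter_upwards [hae] with x hx
    calc ν.rnDeriv vol x ^ pr ≤ (τ.rnDeriv vol x ^ (1 / pr) * c) ^ pr :=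
        ENNReal.rpow_le_rpow hx hpr0.le
      _ = τ.rnDeriv vol x * c ^ pr := by
        rw [ENNReal.mul_rpow_of_nonneg _ _ hpr0.le, ← ENNReal.rpow_mul,
          one_div, inv_mul_cancel₀ hpr0.ne', ENNReal.rpow_one]
  have step3 : ∫⁻ x, τ.rnDeriv vol x * c ^ pr ∂vol ≤ τ Set.univ * c ^ pr := by
    rw [lintegral_mul_const _ hHm]
    exact mul_le_mul_left Measure.lintegral_rnDeriv_le _
  calc (∫⁻ x, (‖(ν.rnDeriv vol x).toReal‖₊ : ℝ≥0∞) ^ pr ∂vol) ^ (1 / pr)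
      ≤ (τ Set.univ * c ^ pr) ^ (1 / pr) := by
        rw [step1]
        exact ENNReal.rpow_le_rpow (step2.trans step3) (by positivity)
    _ = (eLpNorm f p μ ^ pr * eLpNorm g p μ ^ pr * c ^ pr) ^ (1 / pr) := by rw [hτ_univ]
    _ = eLpNorm f p μ * eLpNorm g p μ * c := by
        rw [ENNReal.mul_rpow_of_nonneg _ _ (by positivity),
          ENNReal.mul_rpow_of_nonneg _ _ (by positivity),
          ← ENNReal.rpow_mul, ← ENNReal.rpow_mul, ← ENNReal.rpow_mul,
          mul_one_div, div_self hpr0.ne', ENNReal.rpow_one, ENNReal.rpow_one,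
          ENNReal.rpow_one]
    _ = c * eLpNorm f p μ * eLpNorm g p μ := by ring

end Aux


end AuxiliaryNamespaceOpens

/-- Bilinear convolution estimate: if `μ*μ` has density bounded by `M`, then for
nonnegative `f, g ∈ L^2(μ)` and `1 ≤ p ≤ ∞`, the density of `fμ * gμ` satisfies
`‖fμ * gμ‖_{L^p} ≤ M^{1/p'} ‖f‖_{L^p(μ)} ‖g‖_{L^p(μ)}`. -/
theorem bilinear_conv_estimate {d : ℕ}
    (μ : Measure (EuclideanSpace ℝ (Fin d))) [IsProbabilityMeasure μ]
    (M : ℝ) (hM : 0 ≤ M)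
    (hbd : ∀ A : Set (EuclideanSpace ℝ (Fin d)), MeasurableSet A →
      Measure.map (fun p : EuclideanSpace ℝ (Fin d) × EuclideanSpace ℝ (Fin d) =>
        p.1 + p.2) (μ.prod μ) A ≤ ENNReal.ofReal M * volume A)
    (f g : EuclideanSpace ℝ (Fin d) → ℝ)
    (hfm : Measurable f) (hgm : Measurable g) (hf0 : 0 ≤ f) (hg0 : 0 ≤ g)
    (hf2 : MemLp f 2 μ) (hg2 : MemLp g 2 μ)
    (p : ℝ≥0∞) (hp : 1 ≤ p) :
    eLpNorm (fun x =>
        ((Measure.map (fun q : EuclideanSpace ℝ (Fin d) × EuclideanSpace ℝ (Fin d) =>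
            q.1 + q.2)
          ((μ.withDensity fun y => ENNReal.ofReal (f y)).prod
            (μ.withDensity fun y => ENNReal.ofReal (g y)))).rnDeriv volume x).toReal)
        p volume ≤
      ENNReal.ofReal M ^ (1 - p⁻¹).toReal * eLpNorm f p μ * eLpNorm g p μ :=
  bilinear_aux volume μ
    (fun q : EuclideanSpace ℝ (Fin d) × EuclideanSpace ℝ (Fin d) => q.1 + q.2)
    (measurable_fst.add measurable_snd) M hbd f g hfm hgm hf0 hg0 hf2 hg2 p hp
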